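/- Take the binary binomial interpolated triangle with u = −1 and v = α (and α, β nonzero, a(n) = α·a(n-1) + β·a(n-2)), and define the row-sum sequence s(n) = Σ_{k=0}^{n} A(n,k). Then for all n ≥ 2, s(n) = α·s(n-1) + β·s(n-2). -/

import Mathlib

theorem stmt_10 (α β : ℝ) (hα : α ≠ 0) (hβ : β ≠ 0)
    (a : ℕ → ℝ) (ha : ∀ n, 2 ≤ n → a n = α * a (n-1) + β * a (n-2))
    (A : ℕ → ℕ → ℝ) (hA0 : ∀ n, A n 0 = a n)
    (hA : ∀ n k, 1 ≤ k → k ≤ n → A n k = (-1) * A n (k-1) + α * A (n-1) (k-1))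
    (s : ℕ → ℝ) (hs : ∀ n, s n = ∑ k ∈ Finset.range (n+1), A n k) :
    ∀ n, 2 ≤ n → s n = α * s (n-1) + β * s (n-2) := by
  -- column recurrence
  have col : ∀ k n, k ≤ n → A (n+2) k = α * A (n+1) k + β * A n k := by
    intro k
    induction k with
    | zero =>
      intro n _
      rw [hA0, hA0, hA0, ha (n+2) (by omega)]
      norm_num
    | succ k ih =>
      intro n hk
      obtain ⟨p, rfl⟩ : ∃ p, n = p + 1 := ⟨n - 1, by omega⟩
      have h1 := hA (p+3) (k+1) (by omega) (by omega)
      have h2 := hA (p+2) (k+1) (by omega) (by omega)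
      have h3 := hA (p+1) (k+1) (by omega) (by omega)
      simp only [show p+3-1=p+2 by omega, show p+2-1=p+1 by omega, show k+1-1=k by omega,
        show p+1-1=p by omega] at h1 h2 h3
      have e1 : A (p+1+2) (k+1) = A (p+3) (k+1) := by norm_num
      have e2 : A (p+1+1) (k+1) = A (p+2) (k+1) := by norm_num
      rw [e1, e2, h1, h2, h3]
      have i1 := ih (p+1) (by omega)
      have i2 := ih p (by omega)
      have e3 : A (p+1+2) k = A (p+3) k := by norm_num
      have e4 : A (p+1+1) k = A (p+2) k := by norm_num
      rw [e3, e4] at i1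
      rw [i1, i2]; ring
  intro n hn
  obtain ⟨m, rfl⟩ : ∃ m, n = m + 2 := ⟨n - 2, by omega⟩
  have hn1 : m + 2 - 1 = m + 1 := by omega
  have hn2 : m + 2 - 2 = m := by omega
  rw [hn1, hn2, hs, hs, hs]
  have split2 : ∑ k ∈ Finset.range (m+2+1), A (m+2) k
      = (∑ k ∈ Finset.range (m+1), A (m+2) k) + A (m+2) (m+1) + A (m+2) (m+2) := by
    rw [Finset.sum_range_succ, Finset.sum_range_succ]
  have split1 : ∑ k ∈ Finset.range (m+1+1), A (m+1) k
      = (∑ k ∈ Finset.range (m+1), A (m+1) k) + A (m+1) (m+1) := by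
    rw [Finset.sum_range_succ]
  rw [split2, split1]
  have hbdry := hA (m+2) (m+2) (by omega) (by omega)
  simp only [show m+2-1=m+1 by omega, show m+2-2=m by omega] at hbdry
  have hcols : ∑ k ∈ Finset.range (m+1), A (m+2) k
      = α * (∑ k ∈ Finset.range (m+1), A (m+1) k)
        + β * (∑ k ∈ Finset.range (m+1), A m k) := by
    rw [Finset.mul_sum, Finset.mul_sum, ← Finset.sum_add_distrib]
    exact Finset.sum_congr rfl fun k hk => col k m (by
      have := Finset.mem_range.mp hk; omega)
  rw [hcols, hbdry]
  ring
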